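/- Let e⁻ ≤ e⁺ be real numbers with Δ(e⁻)² = Δ(e⁺)² = 1 and Δ(λ)² > 1 for all λ ∈ (e⁻, e⁺), and suppose there is δ > 0 such that Δ(λ)² < 1 for all λ ∈ (e⁻ − δ, e⁻) ∪ (e⁺, e⁺ + δ) (i.e. [e⁻, e⁺] is a closed spectral gap separating two bands). Then the number of real zeros of the polynomial F in [e⁻, e⁺], counted with multiplicity, is even. -/

import Mathlib

open Polynomial Asymptotics Filter

theorem stmt7
    (q : ℕ) (hq : 1 ≤ q)
    (a b : ℤ → ℝ)
    (ha_per : ∀ n : ℤ, a (n + (q : ℤ)) = a n)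
    (hb_per : ∀ n : ℤ, b (n + (q : ℤ)) = b n)
    (ha_pos : ∀ n : ℤ, 0 < a n)
    (θ φ : ℤ → Polynomial ℝ)
    (hθ_rec : ∀ n : ℤ,
      C (a (n - 1)) * θ (n - 1) + C (a n) * θ (n + 1) + C (b n) * θ n = X * θ n)
    (hφ_rec : ∀ n : ℤ,
      C (a (n - 1)) * φ (n - 1) + C (a n) * φ (n + 1) + C (b n) * φ n = X * φ n)
    (hθ0 : θ 0 = 1) (hθ1 : θ 1 = 0) (hφ0 : φ 0 = 0) (hφ1 : φ 1 = 1)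
    (Δl : Polynomial ℝ) (hΔl : Δl = C ((2:ℝ)⁻¹) * (φ ((q:ℤ) + 1) + θ (q:ℤ)))
    (φh : Polynomial ℝ) (hφh : φh = C ((2:ℝ)⁻¹) * (φ ((q:ℤ) + 1) - θ (q:ℤ)))
    (p : ℕ) (hp : 1 ≤ p)
    (u v : ℤ → ℝ)
    (hu_supp : ∀ n : ℤ, (n < 0 ∨ (p:ℤ) < n) → u n = 0)
    (hv_supp : ∀ n : ℤ, (n < 0 ∨ (p:ℤ) < n) → v n = 0)
    (hv0 : v 0 ≠ 0) (hvp : v (p:ℤ) ≠ 0)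
    (hat_pos : ∀ n : ℤ, 0 < a n + u n)
    (θt φt : ℤ → Polynomial ℝ)
    (hθt_rec : ∀ n : ℤ,
      C (a (n - 1) + u (n - 1)) * θt (n - 1) + C (a n + u n) * θt (n + 1)
        + C (b n + v n) * θt n = X * θt n)
    (hφt_rec : ∀ n : ℤ,
      C (a (n - 1) + u (n - 1)) * φt (n - 1) + C (a n + u n) * φt (n + 1)
        + C (b n + v n) * φt n = X * φt n)
    (hθt_bc : ∀ n : ℤ, (p:ℤ) < n → θt n = θ n)
    (hφt_bc : ∀ n : ℤ, (p:ℤ) < n → φt n = φ n)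
    (Ap : Polynomial ℝ)
    (hAp : Ap = C ((2:ℝ)⁻¹) *
      ((C ((a 0 + u 0) / a 0) * φt 1 - φ 1) + C (v 0 / a 0) * φt 0 + (θt 0 - θ 0)))
    (Jp : Polynomial ℝ)
    (hJp : Jp = -(C ((a 0 + u 0) / a 0) * φ (q:ℤ) * θt 1
      + φh * (C ((a 0 + u 0) / a 0) * φt 1 - θt 0)
      + C (v 0 / a 0) * (φ (q:ℤ) * θt 0 + φh * φt 0)
      + θ ((q:ℤ) + 1) * φt 0))
    (Fp : Polynomial ℝ)
    (hFp : Fp = 4 * (1 - Δl ^ 2) * (1 + Ap) ^ 2 + Jp ^ 2)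
    (em ep : ℝ) (hle : em ≤ ep)
    (hΔem : (Δl.eval em) ^ 2 = 1) (hΔep : (Δl.eval ep) ^ 2 = 1)
    (hgap : ∀ x : ℝ, em < x → x < ep → 1 < (Δl.eval x) ^ 2)
    (δ : ℝ) (hδ : 0 < δ)
    (hband : ∀ x : ℝ, (em - δ < x ∧ x < em) ∨ (ep < x ∧ x < ep + δ) →
      (Δl.eval x) ^ 2 < 1) :
    Even (Multiset.card (Multiset.filter (fun x => em ≤ x ∧ x ≤ ep) Fp.roots)) := by
  classical
  by_cases hF0 : Fp = 0
  · simp [hF0]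
  set S : Multiset ℝ := Multiset.filter (fun x => em ≤ x ∧ x ≤ ep) Fp.roots with hS
  have hSle : S ≤ Fp.roots := Multiset.filter_le _ _
  have hSmem : ∀ r ∈ S, em ≤ r ∧ r ≤ ep := fun r hr => (Multiset.mem_filter.mp hr).2
  set P : Polynomial ℝ := (S.map (fun r => X - C r)).prod with hPdef
  have hPdvd : P ∣ Fp :=
    dvd_trans (Multiset.prod_dvd_prod_of_le (Multiset.map_le_map hSle))
      Fp.prod_multiset_X_sub_C_dvd
  obtain ⟨g, hFg⟩ := hPdvd
  have hg0 : g ≠ 0 := by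
    rintro rfl
    rw [mul_zero] at hFg
    exact hF0 hFg
  have heval : ∀ x : ℝ, Fp.eval x = (S.map (fun r => x - r)).prod * g.eval x := by
    intro x
    rw [hFg, eval_mul, hPdef, Polynomial.eval_multiset_prod, Multiset.map_map]
    simp [Function.comp]
  -- g has no roots in [em, ep]
  have hgroot : ∀ r : ℝ, em ≤ r → r ≤ ep → g.eval r ≠ 0 := by
    intro r h1 h2 hgr
    have hcount : Fp.roots.count r = S.count r := by
      rw [hS, Multiset.count_filter, if_pos ⟨h1, h2⟩]
    have hPr : P.roots = S := by
      rw [hPdef, roots_multiset_prod_X_sub_C]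
    have hmul : rootMultiplicity r Fp = rootMultiplicity r P + rootMultiplicity r g := by
      rw [hFg]; exact rootMultiplicity_mul (hFg ▸ hF0)
    have h1' : rootMultiplicity r Fp = Fp.roots.count r := (count_roots Fp).symm
    have h2' : rootMultiplicity r P = S.count r := by rw [← count_roots, hPr]
    have h3' : 0 < rootMultiplicity r g := (rootMultiplicity_pos hg0).mpr hgr
    omega
  -- evaluation nonnegativity on bands
  have hFnonneg : ∀ x : ℝ, (Δl.eval x) ^ 2 < 1 → 0 ≤ Fp.eval x := by
    intro x hx
    have hFe : Fp.eval x = 4 * (1 - (Δl.eval x) ^ 2) * (1 + Ap.eval x) ^ 2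
        + (Jp.eval x) ^ 2 := by
      rw [hFp]; simp
    rw [hFe]
    nlinarith [sq_nonneg (1 + Ap.eval x), sq_nonneg (Jp.eval x)]
  -- choose x₁ in (em - δ, em) with no roots of Fp in [x₁, em)
  set R : Finset ℝ := Fp.roots.toFinset with hR
  have hmemR : ∀ y : ℝ, Fp.eval y = 0 → y ∈ R := by
    intro y hy
    rw [hR, Multiset.mem_toFinset, mem_roots hF0]
    exact hy
  set s₁ : Finset ℝ := R.filter (fun r => em - δ < r ∧ r < em) with hs₁
  set M₁ : ℝ := if h : s₁.Nonempty then s₁.max' h else em - δ with hM₁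
  have hM₁lt : M₁ < em := by
    rw [hM₁]
    split
    · next h => exact (Finset.mem_filter.mp (s₁.max'_mem h)).2.2
    · linarith
  have hM₁ge : em - δ ≤ M₁ := by
    rw [hM₁]
    split
    · next h => exact le_of_lt (Finset.mem_filter.mp (s₁.max'_mem h)).2.1
    · exact le_refl _
  set x₁ : ℝ := (M₁ + em) / 2 with hx₁def
  have hx₁M : M₁ < x₁ := by rw [hx₁def]; linarith
  have hx₁em : x₁ < em := by rw [hx₁def]; linarith
  have hx₁δ : em - δ < x₁ := lt_of_le_of_lt hM₁ge hx₁M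
  have hx₁noroot : ∀ y : ℝ, x₁ ≤ y → y < em → Fp.eval y ≠ 0 := by
    intro y hy1 hy2 hy0
    have hyR : y ∈ s₁ := by
      rw [hs₁, Finset.mem_filter]
      exact ⟨hmemR y hy0, lt_of_lt_of_le hx₁δ hy1, hy2⟩
    have : y ≤ M₁ := by
      rw [hM₁]
      rw [dif_pos ⟨y, hyR⟩]
      exact Finset.le_max' _ _ hyR
    linarith [lt_of_lt_of_le hx₁M hy1]
  -- choose x₂ in (ep, ep + δ) with no roots of Fp in (ep, x₂]
  set s₂ : Finset ℝ := R.filter (fun r => ep < r ∧ r < ep + δ) with hs₂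
  set M₂ : ℝ := if h : s₂.Nonempty then s₂.min' h else ep + δ with hM₂
  have hM₂gt : ep < M₂ := by
    rw [hM₂]
    split
    · next h => exact (Finset.mem_filter.mp (s₂.min'_mem h)).2.1
    · linarith
  have hM₂le : M₂ ≤ ep + δ := by
    rw [hM₂]
    split
    · next h => exact le_of_lt (Finset.mem_filter.mp (s₂.min'_mem h)).2.2
    · exact le_refl _
  set x₂ : ℝ := (ep + M₂) / 2 with hx₂def
  have hx₂M : x₂ < M₂ := by rw [hx₂def]; linarith
  have hx₂ep : ep < x₂ := by rw [hx₂def]; linarith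
  have hx₂δ : x₂ < ep + δ := lt_of_lt_of_le hx₂M hM₂le
  have hx₂noroot : ∀ y : ℝ, ep < y → y ≤ x₂ → Fp.eval y ≠ 0 := by
    intro y hy1 hy2 hy0
    have hyR : y ∈ s₂ := by
      rw [hs₂, Finset.mem_filter]
      exact ⟨hmemR y hy0, hy1, lt_of_le_of_lt hy2 hx₂δ⟩
    have : M₂ ≤ y := by
      rw [hM₂, dif_pos ⟨y, hyR⟩]
      exact Finset.min'_le _ _ hyR
    linarith [lt_of_le_of_lt hy2 hx₂M]
  -- positivity of Fp at x₁, x₂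
  have hFx₁ : 0 < Fp.eval x₁ :=
    lt_of_le_of_ne (hFnonneg x₁ (hband x₁ (Or.inl ⟨hx₁δ, hx₁em⟩)))
      (fun h => hx₁noroot x₁ le_rfl hx₁em h.symm)
  have hFx₂ : 0 < Fp.eval x₂ :=
    lt_of_le_of_ne (hFnonneg x₂ (hband x₂ (Or.inr ⟨hx₂ep, hx₂δ⟩)))
      (fun h => hx₂noroot x₂ hx₂ep le_rfl h.symm)
  -- product at x₂ is positive
  have hprod₂ : 0 < (S.map (fun r => x₂ - r)).prod := by
    apply Multiset.prod_pos
    intro t ht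
    obtain ⟨r, hr, rfl⟩ := Multiset.mem_map.mp ht
    have := (hSmem r hr).2
    linarith
  have hgx₂ : 0 < g.eval x₂ := by
    by_contra h
    push_neg at h
    have := heval x₂
    nlinarith
  -- g(x₁) > 0: otherwise IVT gives a root of g in [x₁, x₂], impossible
  have hx₁x₂ : x₁ ≤ x₂ := by linarith
  have hgx₁ : 0 < g.eval x₁ := by
    rcases lt_trichotomy (g.eval x₁) 0 with hneg | hzero | hpos
    · exfalso
      have hc : ContinuousOn (fun x => g.eval x) (Set.Icc x₁ x₂) :=
        (Polynomial.continuous g).continuousOn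
      have h0mem : (0 : ℝ) ∈ Set.Icc (g.eval x₁) (g.eval x₂) :=
        ⟨le_of_lt hneg, le_of_lt hgx₂⟩
      obtain ⟨c, hc1, hc2⟩ := intermediate_value_Icc hx₁x₂ hc h0mem
      rcases lt_or_ge c em with hcm | hcm
      · exact hx₁noroot c hc1.1 hcm
          (by rw [heval c, show g.eval c = 0 from hc2, mul_zero])
      · rcases le_or_gt c ep with hcp | hcp
        · exact hgroot c hcm hcp hc2
        · exact hx₂noroot c hcp hc1.2
            (by rw [heval c, show g.eval c = 0 from hc2, mul_zero])
    · exfalso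
      exact hx₁noroot x₁ le_rfl hx₁em (by rw [heval x₁, hzero, mul_zero])
    · exact hpos
  -- hence the product at x₁ is positive
  have hprod₁ : 0 < (S.map (fun r => x₁ - r)).prod := by
    by_contra h
    push_neg at h
    have := heval x₁
    nlinarith
  -- rewrite the product to extract (-1)^card
  have hsplit : ∀ s : Multiset ℝ, (s.map (fun r => x₁ - r)).prod
      = (-1 : ℝ) ^ (Multiset.card s) * (s.map (fun r => r - x₁)).prod := by
    intro s
    induction s using Multiset.induction_on with
    | empty => simp
    | cons a s ih =>
      simp only [Multiset.map_cons, Multiset.prod_cons, Multiset.card_cons, ih, pow_succ]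
      ring
  have hprod₁' : 0 < (S.map (fun r => r - x₁)).prod := by
    apply Multiset.prod_pos
    intro t ht
    obtain ⟨r, hr, rfl⟩ := Multiset.mem_map.mp ht
    have := (hSmem r hr).1
    linarith
  rcases Nat.even_or_odd (Multiset.card S) with h | h
  · exact h
  · exfalso
    rw [hsplit S, h.neg_one_pow, neg_one_mul] at hprod₁
    exact lt_asymm hprod₁' (neg_pos.mp hprod₁)
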